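/- Let n ≥ 4, 0 ≤ j ≤ 3, 1 ≤ k ≤ 4 be integers and let r be an integer with r − k ≥ ⌈(n+j−3)/4⌉. Then ⌊(4(r−k) − (n+j−4) − 1)/2⌋ + φ(j,k) ≥ ⌊(4r − n − 1)/2⌋, where φ(j,k) is defined by φ(0,1)=0, φ(0,2)=2, φ(0,3)=7, φ(0,4)=8, and φ(j,k)=⌊(4k+2j+1)/2⌋ for 1 ≤ j ≤ 3. -/
import Mathlib


/-- `φ(j,k)`: `φ(0,1)=0`, `φ(0,2)=2`, `φ(0,3)=7`, `φ(0,4)=8`, and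
`φ(j,k) = ⌊(4k+2j+1)/2⌋` for `1 ≤ j ≤ 3`. -/
def phi (j k : ℤ) : ℤ :=
  if j = 0 then
    (if k = 1 then 0 else if k = 2 then 2 else if k = 3 then 7 else 8)
  else ⌊(4 * (k : ℚ) + 2 * (j : ℚ) + 1) / 2⌋

/-- The key arithmetic estimate: for integers `n ≥ 4`, `0 ≤ j ≤ 3`, `1 ≤ k ≤ 4` and
`r` with `r - k ≥ ⌈(n+j-3)/4⌉`, one has
`⌊(4(r-k) - (n+j-4) - 1)/2⌋ + φ(j,k) ≥ ⌊(4r-n-1)/2⌋`. -/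
theorem stmt9 (n j k r : ℤ) (hn : 4 ≤ n) (hj0 : 0 ≤ j) (hj3 : j ≤ 3)
    (hk1 : 1 ≤ k) (hk4 : k ≤ 4)
    (hr : ⌈((n : ℚ) + (j : ℚ) - 3) / 4⌉ ≤ r - k) :
    ⌊(4 * ((r : ℚ) - (k : ℚ)) - ((n : ℚ) + (j : ℚ) - 4) - 1) / 2⌋ + phi j k ≥
      ⌊(4 * (r : ℚ) - (n : ℚ) - 1) / 2⌋ := by
  clear hr hn
  have h1 : (4 * ((r : ℚ) - (k : ℚ)) - ((n : ℚ) + (j : ℚ) - 4) - 1) / 2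
      = ((4*(r-k) - (n+j-4) - 1 : ℤ) : ℚ) / ((2:ℕ):ℚ) := by push_cast; ring
  have h2 : (4 * (r : ℚ) - (n : ℚ) - 1) / 2 = ((4*r - n - 1 : ℤ) : ℚ) / ((2:ℕ):ℚ) := by
    push_cast; ring
  rw [h1, h2, Rat.floor_intCast_div_natCast, Rat.floor_intCast_div_natCast]
  interval_cases j <;> interval_cases k <;>
    simp only [phi, if_true, if_false] <;> norm_num <;> omega
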